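/- Let n ∈ ℕ and A, B : ℤ → Matrix (Fin n) (Fin n) ℂ be banded, i.e. A_k = 0 for |k| > d_A and B_k = 0 for |k| > d_B, and define C_k = ∑_{j∈ℤ} A_{k−j} B_j (a finite sum). Let m ∈ ℕ and let η ∈ ℕ satisfy 2η ≥ min(d_A, d_B). Then the block-matrix identity T_m(A)·T_m(B) = T_m(C) − E⁺ − E⁻ holds, where T_m(·) is the m-truncated block Toeplitz matrix, E⁺ is the matrix with block entries E⁺_{ij} = ∑_{k=m+1}^{m+2η+1} A_{i−k} B_{k−j}, and E⁻ is the matrix with block entries E⁻_{ij} = ∑_{k=−m−2η−1}^{−m−1} A_{i−k} B_{k−j}, for i, j ∈ {−m, …, m}. (Theorem 1 of the paper: the truncated Toeplitz block product formula with finite Hankel-product correction terms.) -/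

import Mathlib

private lemma int_Icc_eq_Ioc (a b : ℤ) : Finset.Icc (a + 1) b = Finset.Ioc a b := by
  ext x; simp [Finset.mem_Icc, Finset.mem_Ioc]

/-- Theorem 1 of the paper (truncated Toeplitz block product formula): for banded
matrix symbols `A` (degree `dA`) and `B` (degree `dB`) with convolution `C`, and any
truncation order `m` and any `η` with `2η ≥ min(dA, dB)`, the product of the
`m`-truncated block Toeplitz matrices equals the `m`-truncation of the Toeplitz block
matrix of `C` minus the two (finite) Hankel-product correction terms `E⁺` and `E⁻`. -/
theorem truncated_toeplitz_block_product
    (n : ℕ) (A B : ℤ → Matrix (Fin n) (Fin n) ℂ) (dA dB : ℕ)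
    (hA : ∀ k : ℤ, (dA : ℤ) < |k| → A k = 0)
    (hB : ∀ k : ℤ, (dB : ℤ) < |k| → B k = 0)
    (C : ℤ → Matrix (Fin n) (Fin n) ℂ)
    (hC : ∀ k : ℤ, C k = ∑' j : ℤ, A (k - j) * B j)
    (m η : ℕ) (hη : 2 * η ≥ min dA dB) :
    (Matrix.of fun i j : {k : ℤ // k ∈ Finset.Icc (-(m : ℤ)) (m : ℤ)} × Fin n =>
        A ((i.1 : ℤ) - (j.1 : ℤ)) i.2 j.2) *
      (Matrix.of fun i j : {k : ℤ // k ∈ Finset.Icc (-(m : ℤ)) (m : ℤ)} × Fin n =>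
        B ((i.1 : ℤ) - (j.1 : ℤ)) i.2 j.2)
    = (Matrix.of fun i j : {k : ℤ // k ∈ Finset.Icc (-(m : ℤ)) (m : ℤ)} × Fin n =>
        C ((i.1 : ℤ) - (j.1 : ℤ)) i.2 j.2)
      - (Matrix.of fun i j : {k : ℤ // k ∈ Finset.Icc (-(m : ℤ)) (m : ℤ)} × Fin n =>
          (∑ k ∈ Finset.Icc ((m : ℤ) + 1) ((m : ℤ) + 2 * (η : ℤ) + 1),
            A ((i.1 : ℤ) - k) * B (k - (j.1 : ℤ))) i.2 j.2)
      - (Matrix.of fun i j : {k : ℤ // k ∈ Finset.Icc (-(m : ℤ)) (m : ℤ)} × Fin n =>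
          (∑ k ∈ Finset.Icc (-(m : ℤ) - 2 * (η : ℤ) - 1) (-(m : ℤ) - 1),
            A ((i.1 : ℤ) - k) * B (k - (j.1 : ℤ))) i.2 j.2) := by
  ext ⟨⟨i, hi⟩, a⟩ ⟨⟨j, hj⟩, b⟩
  rw [Finset.mem_Icc] at hi hj
  -- value of C at i - j as a big finite sum
  have hvanish : ∀ k : ℤ, k ∉ Finset.Icc (-(m : ℤ) - 2 * (η : ℤ) - 1) ((m : ℤ) + 2 * (η : ℤ) + 1) →
      A (i - k) * B (k - j) = 0 := by
    intro k hk
    rw [Finset.mem_Icc] at hk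
    rcases le_total dA dB with h | h
    · have : A (i - k) = 0 := by
        apply hA; rw [lt_abs]; omega
      rw [this, zero_mul]
    · have : B (k - j) = 0 := by
        apply hB; rw [lt_abs]; omega
      rw [this, mul_zero]
  have hCval : C (i - j) = ∑ k ∈ Finset.Icc (-(m : ℤ) - 2 * (η : ℤ) - 1) ((m : ℤ) + 2 * (η : ℤ) + 1),
      A (i - k) * B (k - j) := by
    rw [hC]
    have h1 : (∑' j' : ℤ, A (i - j - j') * B j')
        = ∑' k : ℤ, A (i - k) * B (k - j) := by
      rw [← (Equiv.addRight j).tsum_eq (fun k => A (i - k) * B (k - j))]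
      apply tsum_congr
      intro x
      simp only [Equiv.coe_addRight]
      congr 2 <;> ring_nf
    rw [h1, tsum_eq_sum hvanish]
  -- split the big interval into three pieces
  have hsplit : (∑ k ∈ Finset.Icc (-(m : ℤ) - 2 * (η : ℤ) - 1) ((m : ℤ) + 2 * (η : ℤ) + 1),
        A (i - k) * B (k - j))
      = (∑ k ∈ Finset.Icc (-(m : ℤ) - 2 * (η : ℤ) - 1) (-(m : ℤ) - 1), A (i - k) * B (k - j))
        + (∑ k ∈ Finset.Icc (-(m : ℤ)) (m : ℤ), A (i - k) * B (k - j))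
        + (∑ k ∈ Finset.Icc ((m : ℤ) + 1) ((m : ℤ) + 2 * (η : ℤ) + 1), A (i - k) * B (k - j)) := by
    have e1 : Finset.Icc (-(m : ℤ) - 2 * (η : ℤ) - 1) ((m : ℤ) + 2 * (η : ℤ) + 1)
        = Finset.Ioc (-(m : ℤ) - 2 * (η : ℤ) - 2) ((m : ℤ) + 2 * (η : ℤ) + 1) := by
      rw [← int_Icc_eq_Ioc]; congr 1; ring
    have e2 : Finset.Icc (-(m : ℤ) - 2 * (η : ℤ) - 1) (-(m : ℤ) - 1)
        = Finset.Ioc (-(m : ℤ) - 2 * (η : ℤ) - 2) (-(m : ℤ) - 1) := by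
      rw [← int_Icc_eq_Ioc]; congr 1; ring
    have e3 : Finset.Icc (-(m : ℤ)) (m : ℤ) = Finset.Ioc (-(m : ℤ) - 1) (m : ℤ) := by
      rw [← int_Icc_eq_Ioc]; congr 1; ring
    have e4 : Finset.Icc ((m : ℤ) + 1) ((m : ℤ) + 2 * (η : ℤ) + 1)
        = Finset.Ioc (m : ℤ) ((m : ℤ) + 2 * (η : ℤ) + 1) := by
      rw [← int_Icc_eq_Ioc]
    rw [e1, e2, e3, e4]
    rw [← Finset.Ioc_union_Ioc_eq_Ioc (a := (-(m : ℤ) - 2 * (η : ℤ) - 2)) (b := (-(m : ℤ) - 1))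
        (c := ((m : ℤ) + 2 * (η : ℤ) + 1)) (by omega) (by omega),
      Finset.sum_union (by rw [Finset.disjoint_left]; intro x hx hx'; rw [Finset.mem_Ioc] at hx hx'; omega),
      ← Finset.Ioc_union_Ioc_eq_Ioc (a := (-(m : ℤ) - 1)) (b := (m : ℤ))
        (c := ((m : ℤ) + 2 * (η : ℤ) + 1)) (by omega) (by omega),
      Finset.sum_union (by rw [Finset.disjoint_left]; intro x hx hx'; rw [Finset.mem_Ioc] at hx hx'; omega)]
    exact (add_assoc _ _ _).symm
  -- now compute the entry of the product
  simp only [Matrix.mul_apply, Matrix.sub_apply, Matrix.of_apply]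
  rw [Fintype.sum_prod_type]
  have hinner : ∀ x : {k : ℤ // k ∈ Finset.Icc (-(m : ℤ)) (m : ℤ)},
      (∑ c : Fin n, A (i - x.1) a c * B (x.1 - j) c b) = (A (i - x.1) * B (x.1 - j)) a b := by
    intro x; rw [Matrix.mul_apply]
  calc (∑ x : {k : ℤ // k ∈ Finset.Icc (-(m : ℤ)) (m : ℤ)}, ∑ c : Fin n,
          A (i - x.1) a c * B (x.1 - j) c b)
      = ∑ x : {k : ℤ // k ∈ Finset.Icc (-(m : ℤ)) (m : ℤ)},
          (A (i - x.1) * B (x.1 - j)) a b := by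
        exact Finset.sum_congr rfl fun x _ => hinner x
    _ = ∑ k ∈ Finset.Icc (-(m : ℤ)) (m : ℤ), (A (i - k) * B (k - j)) a b := by
        exact Finset.sum_coe_sort (Finset.Icc (-(m : ℤ)) (m : ℤ)) (fun k => (A (i - k) * B (k - j)) a b)
    _ = (∑ k ∈ Finset.Icc (-(m : ℤ)) (m : ℤ), A (i - k) * B (k - j)) a b := by
        rw [Matrix.sum_apply]
    _ = C (i - j) a b
        - (∑ k ∈ Finset.Icc ((m : ℤ) + 1) ((m : ℤ) + 2 * (η : ℤ) + 1),
            A (i - k) * B (k - j)) a b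
        - (∑ k ∈ Finset.Icc (-(m : ℤ) - 2 * (η : ℤ) - 1) (-(m : ℤ) - 1),
            A (i - k) * B (k - j)) a b := by
        rw [hCval, hsplit]
        simp only [Matrix.add_apply]
        ring
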